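/- Let Y be a finite set in R^d and y1, y2 distinct points with y1, y2 ∉ aff(Y) and conv({y1,y2}) ∩ aff(Y) ≠ ∅. Then for any additional point x ∈ R^d, at least one of the following holds: y1 ∉ conv(Y ∪ {x}) or y2 ∉ conv(Y ∪ {x}). -/
import Mathlib


/-- Key step of the obstacle extension lemma: if the segment between `y1` and
`y2` meets the affine hull of `Y` while neither endpoint lies in it, then
after adding any point `x` at least one endpoint stays outside the hull. -/
theorem stmt_17 (d : ℕ) (Y : Finset (Fin d → ℝ)) (y1 y2 : Fin d → ℝ)
    (ha1 : y1 ∉ (affineSpan ℝ (Y : Set (Fin d → ℝ)) : Set (Fin d → ℝ)))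
    (ha2 : y2 ∉ (affineSpan ℝ (Y : Set (Fin d → ℝ)) : Set (Fin d → ℝ)))
    (hmeet : (convexHull ℝ ({y1, y2} : Set (Fin d → ℝ)) ∩
      (affineSpan ℝ (Y : Set (Fin d → ℝ)) : Set (Fin d → ℝ))).Nonempty) :
    ∀ x : Fin d → ℝ,
      y1 ∉ convexHull ℝ (insert x (Y : Set (Fin d → ℝ))) ∨
      y2 ∉ convexHull ℝ (insert x (Y : Set (Fin d → ℝ))) := by
  intro x
  set E := (affineSpan ℝ (Y : Set (Fin d → ℝ)))
  have hconvE : convexHull ℝ (Y : Set (Fin d → ℝ)) ⊆ (E : Set (Fin d → ℝ)) :=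
    convexHull_min (subset_affineSpan ℝ _) (AffineSubspace.convex E)
  by_cases hx : x ∈ (E : Set (Fin d → ℝ))
  · left
    intro h
    apply ha1
    have hsub : convexHull ℝ (insert x (Y : Set (Fin d → ℝ))) ⊆ (E : Set (Fin d → ℝ)) :=
      convexHull_min (Set.insert_subset hx (subset_affineSpan ℝ _)) (AffineSubspace.convex E)
    exact hsub h
  · by_contra hcon
    push_neg at hcon
    obtain ⟨h1, h2⟩ := hcon
    obtain ⟨z, hzseg, hzE⟩ := hmeet
    have hYne : (Y : Set (Fin d → ℝ)).Nonempty := by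
      rcases Y.eq_empty_or_nonempty with rfl | ⟨p, hp⟩
      · simp only [E, Finset.coe_empty, AffineSubspace.span_empty, AffineSubspace.bot_coe, Set.mem_empty_iff_false] at hzE
      · exact ⟨p, by simpa using hp⟩
    rw [convexHull_insert hYne, mem_convexJoin] at h1 h2
    obtain ⟨x1, hx1, w1, hw1, hseg1⟩ := h1
    obtain ⟨x2, hx2, w2, hw2, hseg2⟩ := h2
    rw [Set.mem_singleton_iff] at hx1 hx2
    rw [hx1] at hseg1
    rw [hx2] at hseg2
    obtain ⟨a1, b1, ha1n, hb1n, hab1, heq1⟩ := hseg1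
    obtain ⟨a2, b2, ha2n, hb2n, hab2, heq2⟩ := hseg2
    rw [convexHull_pair] at hzseg
    obtain ⟨t, s, htn, hsn, hts, heqz⟩ := hzseg
    have ha1pos : 0 < a1 := by
      rcases ha1n.lt_or_eq with h | h
      · exact h
      · exfalso; apply ha1
        have : b1 = 1 := by linarith
        have : y1 = w1 := by rw [← heq1, ← h, this]; module
        rw [this]; exact hconvE hw1
    have ha2pos : 0 < a2 := by
      rcases ha2n.lt_or_eq with h | h
      · exact h
      · exfalso; apply ha2
        have : b2 = 1 := by linarith
        have : y2 = w2 := by rw [← heq2, ← h, this]; module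
        rw [this]; exact hconvE hw2
    set μ := t * a1 + s * a2 with hμ
    have hμpos : 0 < μ := by
      rcases htn.lt_or_eq with h | h
      · nlinarith
      · have : s = 1 := by linarith
        simp [hμ, ← h, this, ha2pos]
    have hμle : μ ≤ 1 := by nlinarith
    have hzeq : z = μ • x + ((t * b1) • w1 + (s * b2) • w2) := by
      rw [← heqz, ← heq1, ← heq2]; module
    rcases hμle.lt_or_eq with hμlt | hμone
    · set ν := 1 - μ with hν
      have hνpos : 0 < ν := by simp [hν]; linarith
      have hsum : t * b1 + s * b2 = ν := by
        simp only [hν, hμ]; nlinarith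
      set w := (t * b1 / ν) • w1 + (s * b2 / ν) • w2 with hw
      have hwC : w ∈ convexHull ℝ (Y : Set (Fin d → ℝ)) := by
        apply (convex_convexHull ℝ _) hw1 hw2
        · positivity
        · positivity
        · field_simp
          linarith
      have hwE : w ∈ (E : Set (Fin d → ℝ)) := hconvE hwC
      apply hx
      have hxmem := AffineSubspace.smul_vsub_vadd_mem E μ⁻¹ hzE hwE hwE
      have : μ⁻¹ • (z -ᵥ w) +ᵥ w = x := by
        have hz2 : z = μ • x + ν • w := by
          rw [hzeq, hw]
          have h1' : ν • ((t * b1 / ν) • w1) = (t * b1) • w1 := by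
            rw [smul_smul]; congr 1; field_simp
          have h2' : ν • ((s * b2 / ν) • w2) = (s * b2) • w2 := by
            rw [smul_smul]; congr 1; field_simp
          rw [smul_add, h1', h2']
        simp only [vsub_eq_sub, vadd_eq_add, hz2]
        rw [hν]
        have hμne : μ ≠ 0 := ne_of_gt hμpos
        rw [show μ • x + (1 - μ) • w - w = μ • (x - w) by module, smul_smul,
          inv_mul_cancel₀ hμne, one_smul]
        module
      rwa [this] at hxmem
    · apply hx
      have htb1 : t * b1 = 0 := by nlinarith [mul_nonneg htn hb1n, mul_nonneg hsn hb2n]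
      have hsb2 : s * b2 = 0 := by nlinarith [mul_nonneg htn hb1n, mul_nonneg hsn hb2n]
      have : z = x := by
        rw [hzeq, htb1, hsb2, hμone]; module
      rwa [this] at hzE
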